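/- The characteristic polynomial of the poset of shuffles is χ(W_{m,n},t) = (t−1)^m · Σ_{i=0}^{n} (−1)^i · binom(n,i) · binom(m+i,i) · t^{n−i}. -/

import Mathlib

/-- Greene's poset of shuffles `W_{m,n}`: fixing the disjoint words
`x = x₁…x_m` (the letters `Sum.inl i`) and `y = y₁…y_n` (the letters `Sum.inr j`),
an element is a shuffle of a subword of `x` with a subword of `y`, i.e. a duplicate-free
list of letters whose `x`-letters appear in increasing order and whose `y`-letters
appear in increasing order. -/
def ShuffleWord (m n : ℕ) :=
  {w : List (Fin m ⊕ Fin n) //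
    w.Nodup ∧ (w.filterMap Sum.getLeft?).Pairwise (· < ·) ∧
      (w.filterMap Sum.getRight?).Pairwise (· < ·)}

/-- The order on `W_{m,n}`: `v ≤ w` iff `v_x ⊇ w_x` and `v_y ⊆ w_y` as sets, and the
restriction of `v` to the letters of `w` equals the restriction of `w` to the letters
of `v` as words. -/
def ShuffleLE {m n : ℕ} (v w : ShuffleWord m n) : Prop :=
  (∀ a : Fin m, Sum.inl a ∈ w.1 → Sum.inl a ∈ v.1) ∧
  (∀ b : Fin n, Sum.inr b ∈ v.1 → Sum.inr b ∈ w.1) ∧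
  v.1.filter (fun c => @decide (c ∈ w.1) (Classical.propDecidable _)) =
    w.1.filter (fun c => @decide (c ∈ v.1) (Classical.propDecidable _))

/-- The rank function `ρ(w) = (m − |w_x|) + |w_y|` of `W_{m,n}`. -/
def shuffleRank {m n : ℕ} (w : ShuffleWord m n) : ℕ :=
  (m - (w.1.filterMap Sum.getLeft?).length) + (w.1.filterMap Sum.getRight?).length

namespace ShuffleAux

variable {m n : ℕ}

abbrev L (m n : ℕ) := Fin m ⊕ Fin n

variable {α β : Type*}

def lx (w : List (α ⊕ β)) : List α := w.filterMap Sum.getLeft?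
def ly (w : List (α ⊕ β)) : List β := w.filterMap Sum.getRight?

@[simp] lemma lx_nil : lx ([] : List (α ⊕ β)) = [] := rfl
@[simp] lemma ly_nil : ly ([] : List (α ⊕ β)) = [] := rfl
@[simp] lemma lx_cons_inl (a : α) (w : List (α ⊕ β)) : lx (Sum.inl a :: w) = a :: lx w := rfl
@[simp] lemma lx_cons_inr (b : β) (w : List (α ⊕ β)) : lx (Sum.inr b :: w) = lx w := rfl
@[simp] lemma ly_cons_inl (a : α) (w : List (α ⊕ β)) : ly (Sum.inl a :: w) = ly w := rfl
@[simp] lemma ly_cons_inr (b : β) (w : List (α ⊕ β)) : ly (Sum.inr b :: w) = b :: ly w := rfl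

lemma mem_lx {w : List (α ⊕ β)} {a : α} : a ∈ lx w ↔ Sum.inl a ∈ w := by
  induction w with
  | nil => simp
  | cons c t ih => cases c <;> simp [ih, eq_comm]

lemma mem_ly {w : List (α ⊕ β)} {b : β} : b ∈ ly w ↔ Sum.inr b ∈ w := by
  induction w with
  | nil => simp
  | cons c t ih => cases c <;> simp [ih, eq_comm]

/-- a valid shuffle word predicate transfers along sublists -/
lemma pred_sublist {v w : List (L m n)} (h : v.Sublist w)
    (hw : w.Nodup ∧ (lx w).Pairwise (· < ·) ∧ (ly w).Pairwise (· < ·)) :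
    v.Nodup ∧ (lx v).Pairwise (· < ·) ∧ (ly v).Pairwise (· < ·) :=
  ⟨hw.1.sublist h, hw.2.1.sublist (h.filterMap _), hw.2.2.sublist (h.filterMap _)⟩

lemma lx_sorted (w : ShuffleWord m n) : (lx w.1).Pairwise (· < ·) := w.2.2.1
lemma ly_sorted (w : ShuffleWord m n) : (ly w.1).Pairwise (· < ·) := w.2.2.2
lemma lx_nodup (w : ShuffleWord m n) : (lx w.1).Nodup := (lx_sorted w).nodup
lemma ly_nodup (w : ShuffleWord m n) : (ly w.1).Nodup := (ly_sorted w).nodup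

/-- the finset of x-letters -/
def WX (w : ShuffleWord m n) : Finset (Fin m) := (lx w.1).toFinset
/-- the finset of y-letters -/
def WY (w : ShuffleWord m n) : Finset (Fin n) := (ly w.1).toFinset

lemma mem_WX {w : ShuffleWord m n} {a : Fin m} : a ∈ WX w ↔ Sum.inl a ∈ w.1 := by
  simp [WX, mem_lx]
lemma mem_WY {w : ShuffleWord m n} {b : Fin n} : b ∈ WY w ↔ Sum.inr b ∈ w.1 := by
  simp [WY, mem_ly]

lemma card_WX (w : ShuffleWord m n) : (WX w).card = (lx w.1).length :=
  List.toFinset_card_of_nodup (lx_nodup w)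
lemma card_WY (w : ShuffleWord m n) : (WY w).card = (ly w.1).length :=
  List.toFinset_card_of_nodup (ly_nodup w)

lemma rank_eq (w : ShuffleWord m n) : shuffleRank w = (m - (WX w).card) + (WY w).card := by
  rw [card_WX, card_WY]; rfl

lemma lx_length_le (w : ShuffleWord m n) : (lx w.1).length ≤ m := by
  simpa using (lx_nodup w).length_le_card

/-- letters determine the word, given comparability -/
lemma eq_of_le_of_mem_iff {v w : ShuffleWord m n} (h : ShuffleLE v w)
    (hm : ∀ c, c ∈ v.1 ↔ c ∈ w.1) : v = w := by
  apply Subtype.ext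
  have h3 := h.2.2
  have e1 : v.1.filter (fun c => @decide (c ∈ w.1) (Classical.propDecidable _)) = v.1 :=
    List.filter_eq_self.2 fun c hc => by simpa using (hm c).1 hc
  have e2 : w.1.filter (fun c => @decide (c ∈ v.1) (Classical.propDecidable _)) = w.1 :=
    List.filter_eq_self.2 fun c hc => by simpa using (hm c).2 hc
  rwa [e1, e2] at h3

lemma shuffleLE_refl (w : ShuffleWord m n) : ShuffleLE w w :=
  ⟨fun _ h => h, fun _ h => h, rfl⟩

end ShuffleAux

section Dev2
variable {m n : ℕ}
open ShuffleAux

namespace ShuffleAux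

/-- u has all x-letters -/
def Full (u : ShuffleWord m n) : Prop := ∀ a : Fin m, Sum.inl a ∈ u.1

def keepx (S : Finset (Fin m)) : L m n → Bool :=
  Sum.elim (fun a => decide (a ∈ S)) (fun _ => true)
def keepy (T : Finset (Fin n)) : L m n → Bool :=
  Sum.elim (fun _ => true) (fun b => decide (b ∈ T))

@[simp] lemma keepx_inl {S : Finset (Fin m)} {a : Fin m} :
    keepx (n := n) S (Sum.inl a) = decide (a ∈ S) := rfl
@[simp] lemma keepx_inr {S : Finset (Fin m)} {b : Fin n} :
    keepx (n := n) S (Sum.inr b) = true := rfl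
@[simp] lemma keepy_inl {T : Finset (Fin n)} {a : Fin m} :
    keepy (m := m) T (Sum.inl a) = true := rfl
@[simp] lemma keepy_inr {T : Finset (Fin n)} {b : Fin n} :
    keepy (m := m) T (Sum.inr b) = decide (b ∈ T) := rfl

def resx (u : ShuffleWord m n) (S : Finset (Fin m)) : ShuffleWord m n :=
  ⟨u.1.filter (keepx S), pred_sublist (u.1.filter_sublist) u.2⟩
def resy (w : ShuffleWord m n) (T : Finset (Fin n)) : ShuffleWord m n :=
  ⟨w.1.filter (keepy T), pred_sublist (w.1.filter_sublist) w.2⟩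

/-- `decide` of membership in a filtered list -/
lemma decide_mem_filter (l : List (L m n)) (p : L m n → Bool) (c : L m n)
    {inst : Decidable (c ∈ l.filter p)} {inst2 : Decidable (c ∈ l)} :
    @decide (c ∈ l.filter p) inst = (@decide (c ∈ l) inst2 && p c) := by
  rcases h : p c with _ | _
  · simp [List.mem_filter, h]
  · simp [List.mem_filter, h]

@[simp] lemma mem_resx_inl {u : ShuffleWord m n} {S : Finset (Fin m)} {a : Fin m} :
    Sum.inl a ∈ (resx u S).1 ↔ Sum.inl a ∈ u.1 ∧ a ∈ S := by
  simp [resx, List.mem_filter]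
@[simp] lemma mem_resx_inr {u : ShuffleWord m n} {S : Finset (Fin m)} {b : Fin n} :
    Sum.inr b ∈ (resx u S).1 ↔ Sum.inr b ∈ u.1 := by
  simp [resx, List.mem_filter]
@[simp] lemma mem_resy_inl {w : ShuffleWord m n} {T : Finset (Fin n)} {a : Fin m} :
    Sum.inl a ∈ (resy w T).1 ↔ Sum.inl a ∈ w.1 := by
  simp [resy, List.mem_filter]
@[simp] lemma mem_resy_inr {w : ShuffleWord m n} {T : Finset (Fin n)} {b : Fin n} :
    Sum.inr b ∈ (resy w T).1 ↔ Sum.inr b ∈ w.1 ∧ b ∈ T := by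
  simp [resy, List.mem_filter]

lemma WX_resx {u : ShuffleWord m n} (hu : Full u) (S : Finset (Fin m)) :
    WX (resx u S) = S := by
  ext a; simp [mem_WX, hu a]
lemma WY_resx (u : ShuffleWord m n) (S : Finset (Fin m)) :
    WY (resx u S) = WY u := by
  ext b; simp [mem_WY]
lemma WY_resy {w : ShuffleWord m n} {T : Finset (Fin n)} (hT : T ⊆ WY w) :
    WY (resy w T) = T := by
  ext b; simp only [mem_WY, mem_resy_inr]
  exact ⟨fun h => h.2, fun h => ⟨mem_WY.1 (hT h), h⟩⟩
lemma Full_resy {w : ShuffleWord m n} (hw : Full w) (T : Finset (Fin n)) :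
    Full (resy w T) := fun a => mem_resy_inl.2 (hw a)

lemma le_resx (u : ShuffleWord m n) (S : Finset (Fin m)) : ShuffleLE u (resx u S) := by
  refine ⟨fun a h => (mem_resx_inl.1 h).1, fun b h => mem_resx_inr.2 h, ?_⟩
  have h1 : u.1.filter (fun c => @decide (c ∈ (resx u S).1) (Classical.propDecidable _))
      = u.1.filter (keepx S) := by
    apply List.filter_congr
    intro c hc
    rcases h : keepx S c with _ | _
    · simp [resx, List.mem_filter, h]
    · simp [resx, List.mem_filter, hc, h]
  have h2 : (resx u S).1.filter (fun c => @decide (c ∈ u.1) (Classical.propDecidable _))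
      = (resx u S).1 :=
    List.filter_eq_self.2 fun c hc => by
      simpa using (List.mem_filter.1 hc).1
  rw [h1, h2]; rfl

lemma resy_le (w : ShuffleWord m n) (T : Finset (Fin n)) : ShuffleLE (resy w T) w := by
  refine ⟨fun a h => mem_resy_inl.2 h, fun b h => (mem_resy_inr.1 h).1, ?_⟩
  have h1 : (resy w T).1.filter (fun c => @decide (c ∈ w.1) (Classical.propDecidable _))
      = (resy w T).1 :=
    List.filter_eq_self.2 fun c hc => by
      simpa using (List.mem_filter.1 hc).1
  have h2 : w.1.filter (fun c => @decide (c ∈ (resy w T).1) (Classical.propDecidable _))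
      = w.1.filter (keepy T) := by
    apply List.filter_congr
    intro c hc
    rcases h : keepy T c with _ | _
    · simp [resy, List.mem_filter, h]
    · simp [resy, List.mem_filter, hc, h]
  rw [h1, h2]; rfl

end ShuffleAux
end Dev2

namespace ShuffleAux
variable {m n : ℕ}

lemma resx_le_of {u w : ShuffleWord m n} {S : Finset (Fin m)} (hu : Full u)
    (huw : ShuffleLE u w) (hS : WX w ⊆ S) : ShuffleLE (resx u S) w := by
  have key : ∀ c ∈ w.1, keepx (n := n) S c = true := by
    intro c hcw
    cases c with
    | inl a => simpa using hS (mem_WX.2 hcw)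
    | inr b => rfl
  refine ⟨fun a ha => mem_resx_inl.2 ⟨hu a, hS (mem_WX.2 ha)⟩,
    fun b hb => huw.2.1 b (mem_resx_inr.1 hb), ?_⟩
  have lhs : (resx u S).1.filter (fun c => @decide (c ∈ w.1) (Classical.propDecidable _))
      = w.1.filter (fun c => @decide (c ∈ u.1) (Classical.propDecidable _)) := by
    show (u.1.filter (keepx S)).filter _ = _
    rw [List.filter_filter]
    have e : u.1.filter (fun c => @decide (c ∈ w.1) (Classical.propDecidable _) && keepx S c)
        = u.1.filter (fun c => @decide (c ∈ w.1) (Classical.propDecidable _)) := by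
      apply List.filter_congr
      intro c hc
      rcases h : (@decide (c ∈ w.1) (Classical.propDecidable _)) with _ | _
      · rfl
      · simp [key c ((by simpa using h))]
    rw [e, huw.2.2]
  have rhs : w.1.filter (fun c => @decide (c ∈ (resx u S).1) (Classical.propDecidable _))
      = w.1.filter (fun c => @decide (c ∈ u.1) (Classical.propDecidable _)) := by
    apply List.filter_congr
    intro c hc
    rcases hcu : (@decide (c ∈ u.1) (Classical.propDecidable _)) with _ | _
    · have hnc : c ∉ u.1 := (by simpa using hcu)
      simp [resx, List.mem_filter, hnc]
    · have h1 : c ∈ u.1 := (by simpa using hcu)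
      simp [resx, List.mem_filter, h1, key c hc]
  rw [lhs, rhs]

lemma eq_resx_of {u w : ShuffleWord m n} (hu : Full u) (huw : ShuffleLE u w)
    (hy : ∀ b : Fin n, Sum.inr b ∈ w.1 → Sum.inr b ∈ u.1) : w = resx u (WX w) := by
  apply Subtype.ext
  have h1 : w.1.filter (fun c => @decide (c ∈ u.1) (Classical.propDecidable _)) = w.1 :=
    List.filter_eq_self.2 fun c hc => by
      cases c with
      | inl a => simpa using hu a
      | inr b => simpa using hy b hc
  have h2 : u.1.filter (fun c => @decide (c ∈ w.1) (Classical.propDecidable _))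
      = u.1.filter (keepx (WX w)) := by
    apply List.filter_congr
    intro c _
    cases c with
    | inl a =>
      rcases h : @decide (Sum.inl a ∈ w.1) (Classical.propDecidable _) with _ | _
      · have := (by simpa using h); simp [mem_WX, this]
      · have := (by simpa using h); simp [mem_WX, this]
    | inr b =>
      have : Sum.inr b ∈ w.1 := huw.2.1 b ‹Sum.inr b ∈ u.1›
      simp [this]
  have h3 := huw.2.2
  rw [h2, h1] at h3
  exact h3.symm

lemma le_of_resx_le {u w : ShuffleWord m n} {S : Finset (Fin m)} (hu : Full u)
    (h : ShuffleLE (resx u S) w) : ShuffleLE u w := by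
  have hkey : ∀ c ∈ w.1, keepx (n := n) S c = true := by
    intro c hcw
    cases c with
    | inl a => simpa using (mem_resx_inl.1 (h.1 a hcw)).2
    | inr b => rfl
  refine ⟨fun a _ => hu a, fun b hb => h.2.1 b (mem_resx_inr.2 hb), ?_⟩
  have h3 := h.2.2
  have lhs : (resx u S).1.filter (fun c => @decide (c ∈ w.1) (Classical.propDecidable _))
      = u.1.filter (fun c => @decide (c ∈ w.1) (Classical.propDecidable _)) := by
    show (u.1.filter (keepx S)).filter _ = _
    rw [List.filter_filter]
    apply List.filter_congr
    intro c hc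
    rcases hcw : (@decide (c ∈ w.1) (Classical.propDecidable _)) with _ | _
    · rfl
    · simp [hkey c ((by simpa using hcw))]
  have rhs : w.1.filter (fun c => @decide (c ∈ (resx u S).1) (Classical.propDecidable _))
      = w.1.filter (fun c => @decide (c ∈ u.1) (Classical.propDecidable _)) := by
    apply List.filter_congr
    intro c hc
    rcases hcu : (@decide (c ∈ u.1) (Classical.propDecidable _)) with _ | _
    · have hnc : c ∉ u.1 := (by simpa using hcu)
      simp [resx, List.mem_filter, hnc]
    · have h1 : c ∈ u.1 := (by simpa using hcu)
      simp [resx, List.mem_filter, h1, hkey c hc]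
  rw [lhs, rhs] at h3
  exact h3

lemma eq_resy_of {u w : ShuffleWord m n} (hw : Full w) (hu : Full u)
    (huw : ShuffleLE u w) : u = resy w (WY u) := by
  apply Subtype.ext
  have h1 : u.1.filter (fun c => @decide (c ∈ w.1) (Classical.propDecidable _)) = u.1 :=
    List.filter_eq_self.2 fun c hc => by
      cases c with
      | inl a => simpa using hw a
      | inr b => simpa using huw.2.1 b hc
  have h2 : w.1.filter (fun c => @decide (c ∈ u.1) (Classical.propDecidable _))
      = w.1.filter (keepy (WY u)) := by
    apply List.filter_congr
    intro c _
    cases c with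
    | inl a => simp [hu a]
    | inr b =>
      rcases h : @decide (Sum.inr b ∈ u.1) (Classical.propDecidable _) with _ | _
      · have := (by simpa using h); simp [mem_WY, this]
      · have := (by simpa using h); simp [mem_WY, this]
  have h3 := huw.2.2
  rw [h1, h2] at h3
  exact h3

lemma WX_subset_of_le {c w : ShuffleWord m n} (h : ShuffleLE c w) : WX w ⊆ WX c :=
  fun a ha => mem_WX.2 (h.1 a (mem_WX.1 ha))
lemma WY_subset_of_le {c w : ShuffleWord m n} (h : ShuffleLE c w) : WY c ⊆ WY w :=
  fun b hb => mem_WY.2 (h.2.1 b (mem_WY.1 hb))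

lemma card_WX_le (w : ShuffleWord m n) : (WX w).card ≤ m := by
  simpa using (WX w).card_le_univ

lemma rank_lt_of_le_of_ne {c w : ShuffleWord m n} (h : ShuffleLE c w) (hne : c ≠ w) :
    shuffleRank c < shuffleRank w := by
  have hx := Finset.card_le_card (WX_subset_of_le h)
  have hy := Finset.card_le_card (WY_subset_of_le h)
  have hcm := card_WX_le c
  have hwm := card_WX_le w
  rw [rank_eq, rank_eq]
  rcases lt_or_eq_of_le
      (show (m - (WX c).card) + (WY c).card ≤ (m - (WX w).card) + (WY w).card by omega)
    with hlt | heq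
  · exact hlt
  · exfalso
    have h1 : (WX c).card = (WX w).card := by omega
    have h2 : (WY c).card = (WY w).card := by omega
    have e1 : WX w = WX c := Finset.eq_of_subset_of_card_le (WX_subset_of_le h) (le_of_eq h1)
    have e2 : WY c = WY w := Finset.eq_of_subset_of_card_le (WY_subset_of_le h) (le_of_eq h2.symm)
    apply hne
    apply eq_of_le_of_mem_iff h
    intro x
    cases x with
    | inl a => rw [← mem_WX, ← mem_WX, e1]
    | inr b => rw [← mem_WY, ← mem_WY, e2]

end ShuffleAux

namespace ShuffleAux
section Shuf
variable {α β : Type*} [DecidableEq α] [DecidableEq β]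
set_option linter.unusedSectionVars false

def shuf : List α → List β → Finset (List (α ⊕ β))
  | [], ys => {ys.map Sum.inr}
  | a :: xs, [] => {(a :: xs).map Sum.inl}
  | a :: xs, b :: ys =>
    ((shuf xs (b :: ys)).image (List.cons (Sum.inl a))) ∪
      ((shuf (a :: xs) ys).image (List.cons (Sum.inr b)))
  termination_by xs ys => xs.length + ys.length

lemma shuf_nil_left (ys : List β) : shuf ([] : List α) ys = {ys.map Sum.inr} := by
  rw [shuf]
lemma shuf_cons_nil (a : α) (xs : List α) :
    shuf (a :: xs) ([] : List β) = {(a :: xs).map Sum.inl} := by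
  rw [shuf]
lemma shuf_cons_cons (a : α) (xs : List α) (b : β) (ys : List β) :
    shuf (a :: xs) (b :: ys) =
      ((shuf xs (b :: ys)).image (List.cons (Sum.inl a))) ∪
        ((shuf (a :: xs) ys).image (List.cons (Sum.inr b))) := by
  rw [shuf]

@[simp] lemma lx_map_inr (ys : List β) : lx ((ys.map Sum.inr) : List (α ⊕ β)) = [] := by
  induction ys with
  | nil => rfl
  | cons b t ih => simpa using ih
@[simp] lemma ly_map_inr (ys : List β) : ly ((ys.map Sum.inr) : List (α ⊕ β)) = ys := by
  induction ys with
  | nil => rfl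
  | cons b t ih => simpa using ih
@[simp] lemma lx_map_inl (xs : List α) : lx ((xs.map Sum.inl) : List (α ⊕ β)) = xs := by
  induction xs with
  | nil => rfl
  | cons a t ih => simpa using ih
@[simp] lemma ly_map_inl (xs : List α) : ly ((xs.map Sum.inl) : List (α ⊕ β)) = [] := by
  induction xs with
  | nil => rfl
  | cons a t ih => simpa using ih

lemma eq_map_inr_of_lx_nil {w : List (α ⊕ β)} (h : lx w = []) : w = (ly w).map Sum.inr := by
  induction w with
  | nil => rfl
  | cons c t ih =>
    cases c with
    | inl a => simp at h
    | inr b => simp only [ly_cons_inr, List.map_cons]; rw [← ih (by simpa using h)]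

lemma eq_map_inl_of_ly_nil {w : List (α ⊕ β)} (h : ly w = []) : w = (lx w).map Sum.inl := by
  induction w with
  | nil => rfl
  | cons c t ih =>
    cases c with
    | inr b => simp at h
    | inl a => simp only [lx_cons_inl, List.map_cons]; rw [← ih (by simpa using h)]

lemma mem_shuf_aux :
    ∀ (N : ℕ) (xs : List α) (ys : List β), xs.length + ys.length ≤ N →
      ∀ w : List (α ⊕ β), (w ∈ shuf xs ys ↔ (lx w = xs ∧ ly w = ys)) := by
  intro N
  induction N with
  | zero =>
    intro xs ys h w
    have hxs : xs = [] := by cases xs <;> simp_all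
    have hys : ys = [] := by cases ys <;> simp_all
    subst hxs; subst hys
    rw [shuf_nil_left]
    simp only [List.map_nil, Finset.mem_singleton]
    constructor
    · rintro rfl; simp
    · rintro ⟨h1, h2⟩; rw [eq_map_inr_of_lx_nil h1, h2]; rfl
  | succ N ih =>
    intro xs ys h w
    match xs, ys with
    | [], ys =>
      rw [shuf_nil_left]
      simp only [Finset.mem_singleton]
      constructor
      · rintro rfl; simp
      · rintro ⟨h1, h2⟩; rw [eq_map_inr_of_lx_nil h1, h2]
    | a :: xs, [] =>
      rw [shuf_cons_nil]
      simp only [Finset.mem_singleton]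
      constructor
      · rintro rfl; simp
      · rintro ⟨h1, h2⟩; rw [eq_map_inl_of_ly_nil h2, h1]
    | a :: xs, b :: ys =>
      rw [shuf_cons_cons]
      have h1 : xs.length + (b :: ys).length ≤ N := by simp at h ⊢; omega
      have h2 : (a :: xs).length + ys.length ≤ N := by simp at h ⊢; omega
      simp only [Finset.mem_union, Finset.mem_image]
      constructor
      · rintro (⟨v, hv, rfl⟩ | ⟨v, hv, rfl⟩)
        · have := (ih xs (b :: ys) h1 v).1 hv
          simp [this.1, this.2]
        · have := (ih (a :: xs) ys h2 v).1 hv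
          simp [this.1, this.2]
      · rintro ⟨hl, hr⟩
        cases w with
        | nil => simp at hl
        | cons c t =>
          cases c with
          | inl a' =>
            simp only [lx_cons_inl, List.cons.injEq] at hl
            simp only [ly_cons_inl] at hr
            exact Or.inl ⟨t, (ih xs (b :: ys) h1 t).2 ⟨hl.2, hr⟩, by rw [hl.1]⟩
          | inr b' =>
            simp only [ly_cons_inr, List.cons.injEq] at hr
            simp only [lx_cons_inr] at hl
            exact Or.inr ⟨t, (ih (a :: xs) ys h2 t).2 ⟨hl, hr.2⟩, by rw [hr.1]⟩

lemma mem_shuf {xs : List α} {ys : List β} {w : List (α ⊕ β)} :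
    w ∈ shuf xs ys ↔ (lx w = xs ∧ ly w = ys) :=
  mem_shuf_aux (xs.length + ys.length) xs ys le_rfl w

lemma card_shuf_aux :
    ∀ (N : ℕ) (xs : List α) (ys : List β), xs.length + ys.length ≤ N →
      (shuf xs ys).card = (xs.length + ys.length).choose ys.length := by
  intro N
  induction N with
  | zero =>
    intro xs ys h
    have hxs : xs = [] := by cases xs <;> simp_all
    have hys : ys = [] := by cases ys <;> simp_all
    subst hxs; subst hys
    simp [shuf_nil_left]
  | succ N ih =>
    intro xs ys h
    match xs, ys with
    | [], ys => simp [shuf_nil_left]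
    | a :: xs, [] => simp [shuf_cons_nil]
    | a :: xs, b :: ys =>
      rw [shuf_cons_cons]
      have h1 : xs.length + (b :: ys).length ≤ N := by simp at h ⊢; omega
      have h2 : (a :: xs).length + ys.length ≤ N := by simp at h ⊢; omega
      have hinj1 : Function.Injective (List.cons (Sum.inl a : α ⊕ β)) := by
        intro x y hxy; exact (List.cons_eq_cons.1 hxy).2
      have hinj2 : Function.Injective (List.cons (Sum.inr b : α ⊕ β)) := by
        intro x y hxy; exact (List.cons_eq_cons.1 hxy).2
      have hdisj : Disjoint ((shuf xs (b :: ys)).image (List.cons (Sum.inl a)))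
          ((shuf (a :: xs) ys).image (List.cons (Sum.inr b))) := by
        rw [Finset.disjoint_left]
        rintro x hx hy
        rcases Finset.mem_image.1 hx with ⟨v, _, rfl⟩
        rcases Finset.mem_image.1 hy with ⟨v', _, he⟩
        exact absurd (List.cons_eq_cons.1 he).1 (by simp)
      rw [Finset.card_union_of_disjoint hdisj, Finset.card_image_of_injective _ hinj1,
        Finset.card_image_of_injective _ hinj2, ih _ _ h1, ih _ _ h2]
      simp only [List.length_cons]
      have e1 : xs.length + (ys.length + 1) = xs.length + ys.length + 1 := by omega
      have e2 : xs.length + 1 + ys.length = xs.length + ys.length + 1 := by omega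
      have e3 : xs.length + 1 + (ys.length + 1) = xs.length + ys.length + 1 + 1 := by omega
      rw [e1, e2, e3, Nat.choose_succ_succ (xs.length + ys.length + 1) ys.length]
      simp only [Nat.succ_eq_add_one]
      omega

lemma card_shuf (xs : List α) (ys : List β) :
    (shuf xs ys).card = (xs.length + ys.length).choose ys.length :=
  card_shuf_aux _ xs ys le_rfl

end Shuf
end ShuffleAux

namespace ShuffleAux
open scoped Classical
variable {m n : ℕ}

lemma nodup_of_nodup {α β : Type*} {w : List (α ⊕ β)} (hx : (lx w).Nodup)
    (hy : (ly w).Nodup) : w.Nodup := by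
  induction w with
  | nil => simp
  | cons c t ih =>
    cases c with
    | inl a =>
      rw [lx_cons_inl] at hx; rw [ly_cons_inl] at hy
      rcases List.nodup_cons.1 hx with ⟨ha, hx'⟩
      exact List.nodup_cons.2 ⟨fun hmem => ha (mem_lx.2 hmem), ih hx' hy⟩
    | inr b =>
      rw [ly_cons_inr] at hy; rw [lx_cons_inr] at hx
      rcases List.nodup_cons.1 hy with ⟨hb, hy'⟩
      exact List.nodup_cons.2 ⟨fun hmem => hb (mem_ly.2 hmem), ih hx hy'⟩

lemma sorted_lt_eq_of_mem {γ : Type*} [LinearOrder γ] {l₁ l₂ : List γ}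
    (h₁ : l₁.Pairwise (· < ·)) (h₂ : l₂.Pairwise (· < ·)) (h : ∀ x, x ∈ l₁ ↔ x ∈ l₂) : l₁ = l₂ := by
  classical
  exact List.Perm.eq_of_pairwise' h₁ h₂
    (List.perm_of_nodup_nodup_toFinset_eq h₁.nodup h₂.nodup (by ext x; simp [h x]))


/-- number of full shuffle words with prescribed y-letter set -/
lemma count_full [Fintype (ShuffleWord m n)] (B : Finset (Fin n)) :
    (Finset.univ.filter (fun u : ShuffleWord m n => Full u ∧ WY u = B)).card
      = (m + B.card).choose B.card := by
  have hB : (B.sort (· ≤ ·)).Pairwise (· < ·) := (Finset.sortedLT_sort B).pairwise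
  rw [show (m + B.card).choose B.card
      = ((List.finRange m).length + (B.sort (· ≤ ·)).length).choose (B.sort (· ≤ ·)).length by
        simp [Finset.length_sort]]
  rw [← card_shuf (List.finRange m) (B.sort (· ≤ ·))]
  apply Finset.card_bij (fun u _ => u.1)
  · intro u hu
    rw [Finset.mem_filter] at hu
    obtain ⟨_, hfull, hWY⟩ := hu
    rw [mem_shuf]
    constructor
    · exact sorted_lt_eq_of_mem (lx_sorted u) (List.pairwise_lt_finRange m)
        (fun a => ⟨fun _ => List.mem_finRange a, fun _ => mem_lx.2 (hfull a)⟩)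
    · exact sorted_lt_eq_of_mem (ly_sorted u) hB
        (fun b => by
          rw [Finset.mem_sort, ← hWY]
          exact ⟨fun hb => mem_WY.2 (mem_ly.1 hb), fun hb => mem_ly.2 (mem_WY.1 hb)⟩)
  · intro u _ v _ h
    exact Subtype.ext h
  · intro w hw
    rw [mem_shuf] at hw
    obtain ⟨hlx, hly⟩ := hw
    have hnodup : w.Nodup := by
      apply nodup_of_nodup
      · rw [hlx]; exact List.nodup_finRange m
      · rw [hly]; exact B.sort_nodup (· ≤ ·)
    refine ⟨⟨w, hnodup, ?_, ?_⟩, ?_, rfl⟩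
    · show (lx w).Pairwise (· < ·)
      rw [hlx]; exact List.pairwise_lt_finRange m
    · show (ly w).Pairwise (· < ·)
      rw [hly]; exact hB
    · refine Finset.mem_filter.2 ?_
      refine ⟨Finset.mem_univ _, fun a => ?_, ?_⟩
      · exact mem_lx.1 (by rw [hlx]; exact List.mem_finRange a)
      · ext b
        refine mem_WY.trans ?_
        rw [← mem_ly (w := w), hly, Finset.mem_sort]

end ShuffleAux

namespace ShuffleAux
open scoped Classical
variable {m n : ℕ}

lemma neg_one_pow_sub {a b : ℕ} (h : b ≤ a) : (-1 : ℤ) ^ (a - b) = (-1) ^ a * (-1) ^ b := by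
  have h1 : (-1 : ℤ) ^ (a - b) * (-1) ^ b = (-1) ^ a := by
    rw [← pow_add]; congr 1; omega
  have h2 : ((-1 : ℤ) ^ b) * ((-1) ^ b) = 1 := by
    rw [← pow_add]
    exact Even.neg_one_pow ⟨b, rfl⟩
  calc (-1 : ℤ) ^ (a - b) = (-1) ^ (a - b) * ((-1) ^ b * (-1) ^ b) := by rw [h2, mul_one]
    _ = ((-1) ^ (a - b) * (-1) ^ b) * (-1) ^ b := by ring
    _ = (-1) ^ a * (-1) ^ b := by rw [h1]

lemma full_iff {w : ShuffleWord m n} : Full w ↔ WX w = Finset.univ := by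
  rw [Finset.eq_univ_iff_forall]
  exact forall_congr' fun a => (mem_WX).symm

/-- sum of (-1)^(m - card) over supersets of A -/
lemma sum_supersets (A : Finset (Fin m)) :
    ∑ S ∈ Finset.univ.filter (fun S : Finset (Fin m) => A ⊆ S), (-1 : ℤ) ^ (m - S.card)
      = if A = Finset.univ then 1 else 0 := by
  have hAm : A.card ≤ m := by simpa using A.card_le_univ
  have key : ∑ S ∈ Finset.univ.filter (fun S : Finset (Fin m) => A ⊆ S), (-1 : ℤ) ^ (m - S.card)
      = ∑ T ∈ Aᶜ.powerset, (-1 : ℤ) ^ (m - (A ∪ T).card) := by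
    apply Finset.sum_nbij' (fun S => S \ A) (fun T => A ∪ T)
    · intro S hS
      rw [Finset.mem_powerset]
      intro x hx
      rw [Finset.mem_sdiff] at hx
      simp [hx.2]
    · intro T _
      rw [Finset.mem_filter]
      exact ⟨Finset.mem_univ _, Finset.subset_union_left⟩
    · intro S hS
      rw [Finset.mem_filter] at hS
      exact Finset.union_sdiff_of_subset hS.2
    · intro T hT
      rw [Finset.mem_powerset] at hT
      apply Finset.union_sdiff_cancel_left
      rw [Finset.disjoint_left]
      exact fun x hx hxT => (Finset.mem_compl.1 (hT hxT)) hx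
    · intro S hS
      rw [Finset.mem_filter] at hS
      rw [Finset.union_sdiff_of_subset hS.2]
  rw [key]
  have hval : ∀ T ∈ Aᶜ.powerset, (-1 : ℤ) ^ (m - (A ∪ T).card)
      = ((-1 : ℤ) ^ m * (-1) ^ A.card) * (-1) ^ T.card := by
    intro T hT
    rw [Finset.mem_powerset] at hT
    have hdisj : Disjoint A T := by
      rw [Finset.disjoint_left]
      exact fun x hx hxT => (Finset.mem_compl.1 (hT hxT)) hx
    have hle : (A ∪ T).card ≤ m := by simpa using (A ∪ T).card_le_univ
    rw [neg_one_pow_sub hle, Finset.card_union_of_disjoint hdisj, pow_add]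
    ring
  rw [Finset.sum_congr rfl hval, ← Finset.mul_sum, Finset.sum_powerset_neg_one_pow_card]
  by_cases hA : A = Finset.univ
  · subst hA
    rw [if_pos (by simp), if_pos rfl]
    simp [Finset.card_univ]
    rw [← pow_add]
    exact Even.neg_one_pow ⟨m, rfl⟩
  · rw [if_neg (fun h => hA ((Finset.compl_eq_empty_iff A).1 h)), if_neg hA, mul_zero]

section WithFintype
variable [Fintype (ShuffleWord m n)]

/-- the candidate Möbius function value μ(⊥, w) -/
noncomputable def fmu (w : ShuffleWord m n) : ℤ :=
  ((Finset.univ.filter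
      (fun u : ShuffleWord m n => Full u ∧ ShuffleLE u w ∧ WY u = WY w)).card : ℤ)
    * (-1) ^ (shuffleRank w)

/-- Lemma A : the defining Möbius recursion for fmu -/
lemma sum_fmu (w : ShuffleWord m n) :
    ∑ c ∈ Finset.univ.filter (fun c : ShuffleWord m n => ShuffleLE c w), fmu c
      = if Full w ∧ WY w = ∅ then 1 else 0 := by
  -- expand fmu as an inner sum
  have step1 : ∑ c ∈ Finset.univ.filter (fun c : ShuffleWord m n => ShuffleLE c w), fmu c
      = ∑ c ∈ Finset.univ.filter (fun c : ShuffleWord m n => ShuffleLE c w),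
          ∑ u ∈ Finset.univ.filter
            (fun u : ShuffleWord m n => Full u ∧ ShuffleLE u c ∧ WY u = WY c),
            (-1 : ℤ) ^ (shuffleRank c) := by
    refine Finset.sum_congr rfl fun c _ => ?_
    rw [Finset.sum_const, nsmul_eq_mul]
    rfl
  rw [step1, Finset.sum_sigma']
  -- bijection with pairs (u, S)
  have step2 : ∑ x ∈ (Finset.univ.filter (fun c : ShuffleWord m n => ShuffleLE c w)).sigma
        (fun c => Finset.univ.filter
          (fun u : ShuffleWord m n => Full u ∧ ShuffleLE u c ∧ WY u = WY c)),
        (-1 : ℤ) ^ (shuffleRank x.1)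
      = ∑ p ∈ (Finset.univ.filter (fun u : ShuffleWord m n => Full u ∧ ShuffleLE u w)) ×ˢ
          (Finset.univ.filter (fun S : Finset (Fin m) => WX w ⊆ S)),
          (-1 : ℤ) ^ ((m - p.2.card) + (WY p.1).card) := by
    apply Finset.sum_nbij' (fun x => (x.2, WX x.1)) (fun p => ⟨resx p.1 p.2, p.1⟩)
    · rintro ⟨c, u⟩ hx
      rw [Finset.mem_sigma, Finset.mem_filter, Finset.mem_filter] at hx
      obtain ⟨⟨-, hcw⟩, -, hfull, huc, hWY⟩ := hx
      rw [Finset.mem_product, Finset.mem_filter, Finset.mem_filter]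
      have hcu : ∀ b : Fin n, Sum.inr b ∈ c.1 → Sum.inr b ∈ u.1 := by
        intro b hb
        exact mem_WY.1 (hWY ▸ mem_WY.2 hb)
      have hc : c = resx u (WX c) := eq_resx_of hfull huc hcu
      refine ⟨⟨Finset.mem_univ _, hfull, ?_⟩, Finset.mem_univ _, WX_subset_of_le hcw⟩
      exact le_of_resx_le hfull (hc ▸ hcw)
    · rintro ⟨u, S⟩ hp
      rw [Finset.mem_product, Finset.mem_filter, Finset.mem_filter] at hp
      obtain ⟨⟨-, hfull, huw⟩, -, hS⟩ := hp
      rw [Finset.mem_sigma, Finset.mem_filter, Finset.mem_filter]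
      exact ⟨⟨Finset.mem_univ _, resx_le_of hfull huw hS⟩, Finset.mem_univ _, hfull,
        le_resx u S, (WY_resx u S).symm⟩
    · rintro ⟨c, u⟩ hx
      rw [Finset.mem_sigma, Finset.mem_filter, Finset.mem_filter] at hx
      obtain ⟨⟨-, hcw⟩, -, hfull, huc, hWY⟩ := hx
      have hcu : ∀ b : Fin n, Sum.inr b ∈ c.1 → Sum.inr b ∈ u.1 := by
        intro b hb
        exact mem_WY.1 (hWY ▸ mem_WY.2 hb)
      have hc : resx u (WX c) = c := (eq_resx_of hfull huc hcu).symm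
      show (⟨resx u (WX c), u⟩ : Σ _ : ShuffleWord m n, ShuffleWord m n) = ⟨c, u⟩
      rw [hc]
    · rintro ⟨u, S⟩ hp
      rw [Finset.mem_product, Finset.mem_filter, Finset.mem_filter] at hp
      obtain ⟨⟨-, hfull, -⟩, -, -⟩ := hp
      show (u, WX (resx u S)) = (u, S)
      rw [WX_resx hfull]
    · rintro ⟨c, u⟩ hx
      rw [Finset.mem_sigma, Finset.mem_filter, Finset.mem_filter] at hx
      obtain ⟨⟨-, hcw⟩, -, hfull, huc, hWY⟩ := hx
      have : (WY u).card = (WY c).card := by rw [hWY]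
      rw [rank_eq c, this]
  rw [step2]
  rw [Finset.sum_product]
  have step3 : ∑ u ∈ Finset.univ.filter (fun u : ShuffleWord m n => Full u ∧ ShuffleLE u w),
        ∑ S ∈ Finset.univ.filter (fun S : Finset (Fin m) => WX w ⊆ S),
          (-1 : ℤ) ^ ((m - S.card) + (WY u).card)
      = (∑ u ∈ Finset.univ.filter (fun u : ShuffleWord m n => Full u ∧ ShuffleLE u w),
          (-1 : ℤ) ^ (WY u).card) * (if WX w = Finset.univ then 1 else 0) := by
    rw [Finset.sum_mul]
    refine Finset.sum_congr rfl fun u _ => ?_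
    rw [← sum_supersets (WX w), Finset.mul_sum]
    refine Finset.sum_congr rfl fun S _ => ?_
    rw [pow_add]
    ring
  rw [step3]
  by_cases hfw : Full w
  · rw [if_pos (full_iff.1 hfw), mul_one]
    have step4 : ∑ u ∈ Finset.univ.filter
          (fun u : ShuffleWord m n => Full u ∧ ShuffleLE u w), (-1 : ℤ) ^ (WY u).card
        = ∑ T ∈ (WY w).powerset, (-1 : ℤ) ^ T.card := by
      apply Finset.sum_nbij' (fun u => WY u) (fun T => resy w T)
      · intro u hu
        rw [Finset.mem_filter] at hu
        rw [Finset.mem_powerset]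
        exact WY_subset_of_le hu.2.2
      · intro T hT
        rw [Finset.mem_powerset] at hT
        rw [Finset.mem_filter]
        exact ⟨Finset.mem_univ _, Full_resy hfw T, resy_le w T⟩
      · intro u hu
        rw [Finset.mem_filter] at hu
        exact (eq_resy_of hfw hu.2.1 hu.2.2).symm
      · intro T hT
        rw [Finset.mem_powerset] at hT
        exact WY_resy hT
      · intro u _
        rfl
    rw [step4, Finset.sum_powerset_neg_one_pow_card]
    by_cases hWY : WY w = ∅
    · rw [if_pos hWY, if_pos ⟨hfw, hWY⟩]
    · rw [if_neg hWY, if_neg (fun h => hWY h.2)]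
  · rw [if_neg (fun h => hfw (full_iff.2 h)), mul_zero,
      if_neg (fun h => hfw h.1)]

end WithFintype
end ShuffleAux

namespace ShuffleAux
open scoped Classical
variable {m n : ℕ} [Fintype (ShuffleWord m n)]
set_option linter.unusedSectionVars false

lemma bot_props (bot : ShuffleWord m n) (hbot : ∀ w : ShuffleWord m n, ShuffleLE bot w) :
    Full bot ∧ WY bot = ∅ := by
  constructor
  · intro a
    have hs : ([Sum.inl a] : List (L m n)).Nodup ∧
        (([Sum.inl a] : List (L m n)).filterMap Sum.getLeft?).Pairwise (· < ·) ∧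
        (([Sum.inl a] : List (L m n)).filterMap Sum.getRight?).Pairwise (· < ·) := by
      refine ⟨by simp, List.pairwise_singleton _ _, List.Pairwise.nil⟩
    exact (hbot ⟨[Sum.inl a], hs⟩).1 a (by simp)
  · have he : ([] : List (L m n)).Nodup ∧
        (([] : List (L m n)).filterMap Sum.getLeft?).Pairwise (· < ·) ∧
        (([] : List (L m n)).filterMap Sum.getRight?).Pairwise (· < ·) := by
      refine ⟨by simp, ?_, ?_⟩ <;> simp
    ext b
    simp only [Finset.notMem_empty, iff_false, mem_WY]
    intro hb
    exact absurd ((hbot ⟨[], he⟩).2.1 b hb) (by simp)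

lemma eq_bot_iff' (bot : ShuffleWord m n) (hbot : ∀ w : ShuffleWord m n, ShuffleLE bot w)
    (w : ShuffleWord m n) : (Full w ∧ WY w = ∅) ↔ w = bot := by
  obtain ⟨hbf, hbe⟩ := bot_props bot hbot
  constructor
  · rintro ⟨hwf, hwe⟩
    refine (eq_of_le_of_mem_iff (hbot w) ?_).symm
    intro c
    cases c with
    | inl a => simp [hbf a, hwf a]
    | inr b =>
      constructor
      · intro h; exact absurd (mem_WY.2 h) (by simp [hbe])
      · intro h; exact absurd (mem_WY.2 h) (by simp [hwe])
  · rintro rfl; exact ⟨hbf, hbe⟩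

lemma mu_eq_fmu (mu : ShuffleWord m n → ShuffleWord m n → ℤ)
    (hmu : ∀ a b : ShuffleWord m n, ShuffleLE a b →
      (∑ c ∈ Finset.univ.filter (fun c => ShuffleLE a c ∧ ShuffleLE c b), mu a c) =
        if a = b then 1 else 0)
    (bot : ShuffleWord m n) (hbot : ∀ w : ShuffleWord m n, ShuffleLE bot w)
    (w : ShuffleWord m n) : mu bot w = fmu w := by
  suffices h : ∀ k (w : ShuffleWord m n), shuffleRank w < k → mu bot w = fmu w by
    exact h (shuffleRank w + 1) w (by omega)
  intro k
  induction k with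
  | zero => intro w h; omega
  | succ k ih =>
    intro w hw
    have hrec := hmu bot w (hbot w)
    have hfilter : Finset.univ.filter (fun c : ShuffleWord m n => ShuffleLE bot c ∧ ShuffleLE c w)
        = Finset.univ.filter (fun c : ShuffleWord m n => ShuffleLE c w) := by
      apply Finset.filter_congr
      intro c _
      simp [hbot c]
    rw [hfilter] at hrec
    have hA := sum_fmu (m := m) (n := n) w
    have hiff : (Full w ∧ WY w = ∅) ↔ bot = w := by
      rw [eq_bot_iff' bot hbot w]
      exact ⟨Eq.symm, Eq.symm⟩
    rw [if_congr hiff rfl rfl] at hA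
    set s := Finset.univ.filter (fun c : ShuffleWord m n => ShuffleLE c w) with hs
    have hwmem : w ∈ s := by
      rw [hs, Finset.mem_filter]
      exact ⟨Finset.mem_univ _, shuffleLE_refl w⟩
    have hsub : ∑ c ∈ s.erase w, mu bot c = ∑ c ∈ s.erase w, fmu c := by
      refine Finset.sum_congr rfl fun c hc => ?_
      rw [Finset.mem_erase, hs, Finset.mem_filter] at hc
      have hlt := rank_lt_of_le_of_ne hc.2.2 hc.1
      exact ih c (by omega)
    have h1 := Finset.sum_erase_add s (mu bot) hwmem
    have h2 := Finset.sum_erase_add s fmu hwmem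
    linarith [hrec, hA, hsub, h1, h2]

end ShuffleAux

namespace ShuffleAux
open scoped Classical
open Polynomial
variable {m n : ℕ}
set_option linter.unusedSectionVars false

lemma neg_one_pow_sub' {R : Type*} [Ring R] {a b : ℕ} (h : b ≤ a) :
    (-1 : R) ^ (a - b) = (-1) ^ a * (-1) ^ b := by
  have h1 : (-1 : R) ^ (a - b) * (-1) ^ b = (-1) ^ a := by
    rw [← pow_add]; congr 1; omega
  have h2 : ((-1 : R) ^ b) * ((-1) ^ b) = 1 := by
    rw [← pow_add]
    exact Even.neg_one_pow ⟨b, rfl⟩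
  calc (-1 : R) ^ (a - b) = (-1) ^ (a - b) * ((-1) ^ b * (-1) ^ b) := by rw [h2, mul_one]
    _ = ((-1) ^ (a - b) * (-1) ^ b) * (-1) ^ b := by rw [mul_assoc]
    _ = (-1) ^ a * (-1) ^ b := by rw [h1]

lemma sum_signs_poly :
    ∑ S : Finset (Fin m), (Polynomial.C ((-1 : ℤ) ^ (m - S.card)) * Polynomial.X ^ S.card)
      = (Polynomial.X - 1) ^ m := by
  rw [show (Finset.univ : Finset (Finset (Fin m))) = (Finset.univ : Finset (Fin m)).powerset from
    Finset.powerset_univ.symm]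
  rw [Finset.sum_powerset_apply_card (fun k => (C ((-1 : ℤ) ^ (m - k)) * X ^ k : ℤ[X]))]
  rw [show ((Finset.univ : Finset (Fin m)).card) = m by simp]
  rw [sub_pow X (1 : ℤ[X]) m]
  refine Finset.sum_congr rfl fun k hk => ?_
  rw [Finset.mem_range] at hk
  have hkm : k ≤ m := by omega
  have hC : (C ((-1 : ℤ) ^ (m - k)) : ℤ[X]) = (-1 : ℤ[X]) ^ (m - k) := by
    simp
  rw [hC, neg_one_pow_sub' hkm, nsmul_eq_mul]
  rw [pow_add]
  ring

variable [Fintype (ShuffleWord m n)]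

lemma card_WY_le (u : ShuffleWord m n) : (WY u).card ≤ n := by
  simpa using (WY u).card_le_univ

lemma count_sum_poly :
    ∑ u ∈ Finset.univ.filter (fun u : ShuffleWord m n => Full u),
        (C ((-1 : ℤ) ^ (WY u).card) * X ^ (n - (WY u).card))
      = ∑ i ∈ Finset.range (n + 1),
          C ((-1) ^ i * (n.choose i : ℤ) * ((m + i).choose i : ℤ)) * X ^ (n - i) := by
  rw [← Finset.sum_fiberwise_of_maps_to
    (g := fun u : ShuffleWord m n => WY u) (t := Finset.univ)
    (fun u _ => Finset.mem_univ _)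
    (fun u => (C ((-1 : ℤ) ^ (WY u).card) * X ^ (n - (WY u).card)))]
  have inner : ∀ B : Finset (Fin n),
      ∑ u ∈ (Finset.univ.filter (fun u : ShuffleWord m n => Full u)).filter
          (fun u => WY u = B),
        (C ((-1 : ℤ) ^ (WY u).card) * X ^ (n - (WY u).card))
      = ((m + B.card).choose B.card) • (C ((-1 : ℤ) ^ B.card) * X ^ (n - B.card)) := by
    intro B
    rw [Finset.filter_filter]
    calc ∑ u ∈ Finset.univ.filter (fun u : ShuffleWord m n => Full u ∧ WY u = B),
          (C ((-1 : ℤ) ^ (WY u).card) * X ^ (n - (WY u).card))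
        = ∑ _u ∈ Finset.univ.filter (fun u : ShuffleWord m n => Full u ∧ WY u = B),
          (C ((-1 : ℤ) ^ B.card) * X ^ (n - B.card)) :=
          Finset.sum_congr rfl fun u hu => by rw [(Finset.mem_filter.1 hu).2.2]
      _ = _ := by rw [Finset.sum_const, count_full B]
  rw [Finset.sum_congr rfl fun B _ => inner B]
  rw [show (Finset.univ : Finset (Finset (Fin n))) = (Finset.univ : Finset (Fin n)).powerset from
    Finset.powerset_univ.symm]
  rw [Finset.sum_powerset_apply_card
    (fun i => ((m + i).choose i) • (C ((-1 : ℤ) ^ i) * X ^ (n - i)))]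
  rw [show ((Finset.univ : Finset (Fin n)).card) = n by simp]
  refine Finset.sum_congr rfl fun i _ => ?_
  rw [nsmul_eq_mul, nsmul_eq_mul, C_mul, C_mul, map_natCast C, map_natCast C]
  ring

lemma main_poly :
    ∑ w : ShuffleWord m n, Polynomial.C (fmu w) * Polynomial.X ^ ((m + n) - shuffleRank w)
      = (Polynomial.X - 1) ^ m *
        ∑ i ∈ Finset.range (n + 1),
          C ((-1) ^ i * (n.choose i : ℤ) * ((m + i).choose i : ℤ)) * X ^ (n - i) := by
  have step1 : ∀ w : ShuffleWord m n,
      Polynomial.C (fmu w) * Polynomial.X ^ ((m + n) - shuffleRank w)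
        = ∑ u ∈ Finset.univ.filter
            (fun u : ShuffleWord m n => Full u ∧ ShuffleLE u w ∧ WY u = WY w),
            C ((-1 : ℤ) ^ (shuffleRank w)) * X ^ ((m + n) - shuffleRank w) := by
    intro w
    rw [Finset.sum_const, fmu, C_mul, map_natCast, nsmul_eq_mul]
    ring
  rw [Finset.sum_congr rfl fun w _ => step1 w, Finset.sum_sigma']
  have step2 : ∑ x ∈ (Finset.univ : Finset (ShuffleWord m n)).sigma
        (fun w => Finset.univ.filter
          (fun u : ShuffleWord m n => Full u ∧ ShuffleLE u w ∧ WY u = WY w)),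
        (C ((-1 : ℤ) ^ (shuffleRank x.1)) * X ^ ((m + n) - shuffleRank x.1))
      = ∑ p ∈ (Finset.univ.filter (fun u : ShuffleWord m n => Full u)) ×ˢ
          (Finset.univ : Finset (Finset (Fin m))),
          (C ((-1 : ℤ) ^ ((m - p.2.card) + (WY p.1).card))
            * X ^ ((m + n) - ((m - p.2.card) + (WY p.1).card))) := by
    apply Finset.sum_nbij' (fun x => (x.2, WX x.1)) (fun p => ⟨resx p.1 p.2, p.1⟩)
    · rintro ⟨w, u⟩ hx
      rw [Finset.mem_sigma, Finset.mem_filter] at hx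
      obtain ⟨-, -, hfull, -, -⟩ := hx
      rw [Finset.mem_product, Finset.mem_filter]
      exact ⟨⟨Finset.mem_univ _, hfull⟩, Finset.mem_univ _⟩
    · rintro ⟨u, S⟩ hp
      rw [Finset.mem_product, Finset.mem_filter] at hp
      obtain ⟨⟨-, hfull⟩, -⟩ := hp
      rw [Finset.mem_sigma, Finset.mem_filter]
      exact ⟨Finset.mem_univ _, Finset.mem_univ _, hfull, le_resx u S, (WY_resx u S).symm⟩
    · rintro ⟨w, u⟩ hx
      rw [Finset.mem_sigma, Finset.mem_filter] at hx
      obtain ⟨-, -, hfull, huw, hWY⟩ := hx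
      have hwu : ∀ b : Fin n, Sum.inr b ∈ w.1 → Sum.inr b ∈ u.1 := by
        intro b hb
        exact mem_WY.1 (hWY ▸ mem_WY.2 hb)
      have hw : resx u (WX w) = w := (eq_resx_of hfull huw hwu).symm
      show (⟨resx u (WX w), u⟩ : Σ _ : ShuffleWord m n, ShuffleWord m n) = ⟨w, u⟩
      rw [hw]
    · rintro ⟨u, S⟩ hp
      rw [Finset.mem_product, Finset.mem_filter] at hp
      obtain ⟨⟨-, hfull⟩, -⟩ := hp
      show (u, WX (resx u S)) = (u, S)
      rw [WX_resx hfull]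
    · rintro ⟨w, u⟩ hx
      rw [Finset.mem_sigma, Finset.mem_filter] at hx
      obtain ⟨-, -, -, -, hWY⟩ := hx
      have hc : (WY u).card = (WY w).card := by rw [hWY]
      rw [rank_eq w, hc]
  rw [step2, Finset.sum_product]
  have step3 : ∀ u : ShuffleWord m n, Full u →
      ∑ S ∈ (Finset.univ : Finset (Finset (Fin m))),
        (C ((-1 : ℤ) ^ ((m - S.card) + (WY u).card))
          * X ^ ((m + n) - ((m - S.card) + (WY u).card)))
      = (Polynomial.X - 1) ^ m * (C ((-1 : ℤ) ^ (WY u).card) * X ^ (n - (WY u).card)) := by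
    intro u _
    have hb : (WY u).card ≤ n := card_WY_le u
    rw [← sum_signs_poly, Finset.sum_mul]
    refine Finset.sum_congr rfl fun S _ => ?_
    have hk : S.card ≤ m := by simpa using S.card_le_univ
    have he : (m + n) - ((m - S.card) + (WY u).card) = S.card + (n - (WY u).card) := by omega
    rw [he, pow_add, C_mul, pow_add]
    ring
  rw [Finset.sum_congr rfl fun u hu => step3 u (Finset.mem_filter.1 hu).2]
  rw [← Finset.mul_sum, count_sum_poly]

end ShuffleAux

open scoped Classical in
open Polynomial in
/-- The characteristic polynomial
`χ(W_{m,n},t) = Σ_w μ(⊥,w) t^{(m+n)−ρ(w)}` of the shuffle poset is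
`(t−1)^m · Σ_{i=0}^{n} (−1)^i binom(n,i) binom(m+i,i) t^{n−i}`.
Here `mu` is the Möbius function of `W_{m,n}` and `bot` its bottom element `x`. -/
theorem shuffleChi (m n : ℕ) [Fintype (ShuffleWord m n)]
    (mu : ShuffleWord m n → ShuffleWord m n → ℤ)
    (hmu : ∀ a b : ShuffleWord m n, ShuffleLE a b →
      (∑ c ∈ Finset.univ.filter (fun c => ShuffleLE a c ∧ ShuffleLE c b), mu a c) =
        if a = b then 1 else 0)
    (bot : ShuffleWord m n) (hbot : ∀ w : ShuffleWord m n, ShuffleLE bot w) :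
    ∑ w : ShuffleWord m n, C (mu bot w) * X ^ ((m + n) - shuffleRank w)
      = (X - 1) ^ m *
        ∑ i ∈ Finset.range (n + 1),
          C ((-1) ^ i * (n.choose i : ℤ) * ((m + i).choose i : ℤ)) * X ^ (n - i) := by
  have hfmu : ∀ w : ShuffleWord m n, mu bot w = ShuffleAux.fmu w :=
    ShuffleAux.mu_eq_fmu mu hmu bot hbot
  calc ∑ w : ShuffleWord m n, C (mu bot w) * X ^ ((m + n) - shuffleRank w)
      = ∑ w : ShuffleWord m n, C (ShuffleAux.fmu w) * X ^ ((m + n) - shuffleRank w) :=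
        Finset.sum_congr rfl fun w _ => by rw [hfmu w]
    _ = _ := ShuffleAux.main_poly
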